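/- For each integer n ≥ 1, consider a recursive estimation process (θ̂_t^{(n)})_{t≥0} with θ̂_0^{(n)} = θ* and per-step conditional tail bound with rate function r(m) = m^κ for some κ > 0 and sample sizes n_0 = n, n_t = c_t·n, where the schedule satisfies a₁·t^{γ(1+s)/κ} ≤ c_t ≤ a₂·t^{γ(1+s)/κ} for some constants a₁, a₂ > 0 and s > 0. Then for every δ > 0, lim_{n→∞} limsup_{T→∞} P(‖θ̂_T^{(n)} − θ*‖₂ ≥ δ) = 0. -/

import Mathlib

open MeasureTheory ProbabilityTheory Filter

/-- The Euclidean (`ℓ²`) norm of a vector in `ℝ^p`. -/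
noncomputable def l2norm {p : ℕ} (x : Fin p → ℝ) : ℝ := Real.sqrt (∑ i, (x i) ^ 2)

lemma l2norm_eq_norm {p : ℕ} (x : Fin p → ℝ) :
    l2norm x = ‖(WithLp.equiv 2 (Fin p → ℝ)).symm x‖ := by
  rw [EuclideanSpace.norm_eq]
  simp [l2norm, Real.norm_eq_abs, sq_abs]

lemma l2norm_sum_le {p : ℕ} (s : Finset ℕ) (f : ℕ → Fin p → ℝ) :
    l2norm (∑ i ∈ s, f i) ≤ ∑ i ∈ s, l2norm (f i) := by
  simp only [l2norm_eq_norm]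
  exact (norm_sum_le s fun i => (WithLp.equiv 2 (Fin p → ℝ)).symm (f i)).trans_eq' (by simp [WithLp.toLp_sum])

lemma l2norm_continuous {p : ℕ} : Continuous (l2norm (p := p)) :=
  Real.continuous_sqrt.comp (continuous_finset_sum _ fun i _ => (continuous_apply i).pow 2)

lemma summable_exp_neg_rpow' {B e : ℝ} (hB : 0 < B) (he : 0 < e) :
    Summable (fun t : ℕ => Real.exp (-(B * (t : ℝ) ^ e))) := by
  set m : ℕ := ⌈2 / e⌉₊ with hm
  have hem : 2 ≤ e * m := by
    have h1 : 2 / e ≤ (m : ℝ) := Nat.le_ceil _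
    calc (2:ℝ) = e * (2 / e) := by field_simp
    _ ≤ e * m := by nlinarith
  set K : ℝ := m.factorial / B ^ m with hK
  have hKpos : 0 < K := div_pos (by positivity) (by positivity)
  have key : ∀ x : ℝ, 1 ≤ x → Real.exp (-(B * x ^ e)) ≤ K * x ^ (-(2:ℝ)) := by
    intro x hx
    have hx0 : (0:ℝ) < x := lt_of_lt_of_le one_pos hx
    have hy : (0:ℝ) < B * x ^ e := by positivity
    have h1 : (B * x ^ e) ^ m / m.factorial ≤ Real.exp (B * x ^ e) :=
      Real.pow_div_factorial_le_exp _ hy.le m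
    have h2 : (B * x ^ e) ^ m = B ^ m * x ^ (e * m) := by
      rw [mul_pow, ← Real.rpow_natCast (x ^ e) m, ← Real.rpow_mul hx0.le]
    have hden : (0:ℝ) < (B * x ^ e) ^ m / m.factorial := by positivity
    have h3 : Real.exp (-(B * x ^ e)) ≤ K * x ^ (-(e * m)) := by
      rw [Real.exp_neg]
      calc (Real.exp (B * x ^ e))⁻¹ ≤ ((B * x ^ e) ^ m / m.factorial)⁻¹ :=
            inv_anti₀ hden h1
      _ = K * x ^ (-(e * m)) := by
            rw [h2, Real.rpow_neg hx0.le, hK]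
            field_simp
    refine h3.trans (mul_le_mul_of_nonneg_left ?_ hKpos.le)
    exact Real.rpow_le_rpow_of_exponent_le hx (by linarith)
  have hsum2 : Summable (fun t : ℕ => K * ((t+1 : ℕ) : ℝ) ^ (-(2:ℝ))) := by
    have := (Real.summable_nat_rpow (p := (-2:ℝ))).mpr (by norm_num)
    exact ((summable_nat_add_iff 1).mpr this).mul_left K
  rw [← summable_nat_add_iff 1]
  apply Summable.of_nonneg_of_le (fun t => (Real.exp_pos _).le) _ hsum2
  intro t
  exact key _ (by exact_mod_cast Nat.one_le_iff_ne_zero.mpr (Nat.succ_ne_zero t))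

lemma tail_prob {Ω : Type} [mΩ : MeasurableSpace Ω] (μ : Measure Ω) [IsProbabilityMeasure μ]
    (𝒢 : Filtration ℕ mΩ) (t : ℕ) {A : Set Ω} (hA : MeasurableSet A) {b : ℝ}
    (h : ∀ᵐ ω ∂μ, (μ[A.indicator (fun _ => (1:ℝ)) | 𝒢 t]) ω ≤ b) : (μ A).toReal ≤ b := by
  calc (μ A).toReal = ∫ ω, A.indicator (fun _ => (1:ℝ)) ω ∂μ :=
        (integral_indicator_one (μ := μ) hA).symm
  _ = ∫ ω, (μ[A.indicator (fun _ => (1:ℝ)) | 𝒢 t]) ω ∂μ := (integral_condExp (𝒢.le t)).symm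
  _ ≤ ∫ _, b ∂μ := integral_mono_ae integrable_condExp (integrable_const b) h
  _ = b := by simp

theorem stmt_4
    {Ω : Type} [mΩ : MeasurableSpace Ω] (μ : Measure Ω) [IsProbabilityMeasure μ]
    (p : ℕ) (hp : 1 ≤ p) (θstar : Fin p → ℝ)
    (C₁ C₂ γ κ s a₁ a₂ : ℝ) (hC₁ : 0 < C₁) (hC₂ : 0 < C₂) (hγ : 0 < γ) (hκ : 0 < κ)
    (hs : 0 < s) (ha₁ : 0 < a₁) (ha₂ : 0 < a₂)
    (c : ℕ → ℝ) (hcpos : ∀ t, 0 < c t) (hc0 : c 0 = 1)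
    (hcsched : ∀ t : ℕ, 1 ≤ t →
      a₁ * (t : ℝ) ^ (γ * (1 + s) / κ) ≤ c t ∧ c t ≤ a₂ * (t : ℝ) ^ (γ * (1 + s) / κ))
    (F : ℕ → Filtration ℕ mΩ)
    (θhat : ℕ → ℕ → Ω → (Fin p → ℝ))
    (hadapt : ∀ n, Adapted (F n) (θhat n))
    (h0 : ∀ n, ∀ᵐ ω ∂μ, θhat n 0 ω = θstar)
    (htail : ∀ n : ℕ, 1 ≤ n → ∀ t : ℕ, 1 ≤ t → ∀ δ' : ℝ, 0 < δ' →
      ∀ᵐ ω ∂μ,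
        (μ[Set.indicator {ω' | δ' < l2norm (θhat n t ω' - θhat n (t - 1) ω')}
            (fun _ => (1 : ℝ)) | (F n) (t - 1)]) ω
          ≤ C₁ * Real.exp (-C₂ * (c (t - 1) * n) ^ κ * δ' ^ γ)) :
    ∀ δ : ℝ, 0 < δ →
      Tendsto (fun n : ℕ =>
          limsup (fun T : ℕ => (μ {ω | δ ≤ l2norm (θhat n T ω - θstar)}).toReal) atTop)
        atTop (nhds 0) := by
  intro δ hδ
  -- constants
  set β : ℝ := 1 + s / 2 with hβ
  have hβ1 : 1 < β := by simp [hβ]; linarith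
  have hsumZ : Summable (fun t : ℕ => (t : ℝ) ^ (-β)) :=
    Real.summable_nat_rpow.mpr (by linarith)
  set Z : ℝ := ∑' t : ℕ, (t : ℝ) ^ (-β) with hZ
  have hZ0 : 0 ≤ Z := tsum_nonneg fun t => Real.rpow_nonneg (Nat.cast_nonneg t) _
  set A : ℝ := δ / (2 * (Z + 1)) with hA
  have hApos : 0 < A := by positivity
  set dl : ℕ → ℝ := fun t => A * (t : ℝ) ^ (-β) with hdl
  have hdlnn : ∀ t, 0 ≤ dl t := fun t => by positivity
  -- partial sums of dl are < δ
  have hpartial : ∀ T : ℕ, ∑ i ∈ Finset.range T, dl (i + 1) < δ := by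
    intro T
    have h1 : ∑ i ∈ Finset.range T, dl (i + 1) ≤ ∑ i ∈ Finset.range (T + 1), dl i := by
      rw [Finset.sum_range_succ']
      exact le_add_of_nonneg_right (hdlnn 0)
    have h2 : ∑ i ∈ Finset.range (T + 1), dl i ≤ A * Z := by
      rw [hZ, ← tsum_mul_left]
      exact Summable.sum_le_tsum _ (fun i _ => hdlnn i) (hsumZ.mul_left A)
    have h3 : A * Z < δ := by
      rw [hA]
      rw [div_mul_eq_mul_div, div_lt_iff₀ (by positivity)]
      nlinarith
    linarith
  set e : ℝ := γ * s / 2 with he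
  have hepos : 0 < e := by positivity
  set B : ℝ := C₂ * A ^ γ * min 1 (a₁ ^ κ * (2 : ℝ) ^ (-(γ * (1 + s)))) with hB
  have hBpos : 0 < B := by
    apply mul_pos (by positivity)
    exact lt_min one_pos (by positivity)
  -- summable majorant
  have hgsum : Summable (fun t : ℕ => C₁ * Real.exp (-(B * (t : ℝ) ^ e))) :=
    (summable_exp_neg_rpow' hBpos hepos).mul_left C₁
  set G : ℝ := ∑' t : ℕ, C₁ * Real.exp (-(B * (t : ℝ) ^ e)) with hG
  have hG0 : 0 ≤ G := tsum_nonneg fun t => by positivity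
  -- the key exponent inequality
  have hexpineq : ∀ n : ℕ, 1 ≤ n → ∀ t : ℕ, 1 ≤ t →
      B * (n : ℝ) ^ κ * (t : ℝ) ^ e ≤ C₂ * (c (t - 1) * n) ^ κ * dl t ^ γ := by
    intro n hn t ht
    have hx1 : (1 : ℝ) ≤ (t : ℝ) := by exact_mod_cast ht
    have hx0 : (0 : ℝ) < (t : ℝ) := by linarith
    have hnn : (0 : ℝ) ≤ (n : ℝ) := Nat.cast_nonneg n
    have hmul : (c (t - 1) * n) ^ κ = c (t - 1) ^ κ * (n : ℝ) ^ κ :=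
      Real.mul_rpow (hcpos _).le hnn
    have hδγ : dl t ^ γ = A ^ γ * (t : ℝ) ^ (-(β * γ)) := by
      rw [hdl]
      rw [Real.mul_rpow hApos.le (Real.rpow_nonneg hx0.le _), ← Real.rpow_mul hx0.le,
        neg_mul]
    rcases eq_or_lt_of_le ht with h1 | h2
    · -- t = 1
      have ht1 : t = 1 := h1.symm
      subst ht1
      have hBle : B ≤ C₂ * A ^ γ := by
        rw [hB]
        calc C₂ * A ^ γ * min 1 (a₁ ^ κ * (2 : ℝ) ^ (-(γ * (1 + s))))
            ≤ C₂ * A ^ γ * 1 := by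
              exact mul_le_mul_of_nonneg_left (min_le_left _ _) (by positivity)
        _ = C₂ * A ^ γ := mul_one _
      simp only [Nat.cast_one, Real.one_rpow, Nat.sub_self, hc0, one_mul] at *
      rw [hδγ]
      have hnκ : (0:ℝ) ≤ (n : ℝ) ^ κ := Real.rpow_nonneg hnn κ
      nlinarith [mul_nonneg (sub_nonneg.mpr hBle) hnκ]
    · -- 2 ≤ t
      have ht2 : 2 ≤ t := h2
      have h2x : (2 : ℝ) ≤ (t : ℝ) := by exact_mod_cast ht2
      have ht1 : 1 ≤ t - 1 := by omega
      have hcast : ((t - 1 : ℕ) : ℝ) = (t : ℝ) - 1 := by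
        have := Nat.cast_sub (R := ℝ) ht
        simpa using this
      obtain ⟨hclow, _⟩ := hcsched (t - 1) ht1
      rw [hcast] at hclow
      set q : ℝ := γ * (1 + s) with hq
      have hqpos : 0 < q := by positivity
      have htm1 : (0 : ℝ) ≤ (t : ℝ) - 1 := by linarith
      have hcκ : a₁ ^ κ * ((t : ℝ) - 1) ^ q ≤ c (t - 1) ^ κ := by
        have h := Real.rpow_le_rpow (by positivity) hclow hκ.le
        rwa [Real.mul_rpow ha₁.le (Real.rpow_nonneg htm1 _), ← Real.rpow_mul htm1,
          div_mul_cancel₀ _ (ne_of_gt hκ)] at h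
      have hhalf : (t : ℝ) / 2 ≤ (t : ℝ) - 1 := by linarith
      have hpow : ((t : ℝ) / 2) ^ q ≤ ((t : ℝ) - 1) ^ q :=
        Real.rpow_le_rpow (by positivity) hhalf hqpos.le
      have hsplit : ((t : ℝ) / 2) ^ q = (t : ℝ) ^ q * (2 : ℝ) ^ (-q) := by
        rw [Real.div_rpow hx0.le (by norm_num), Real.rpow_neg (by norm_num), div_eq_mul_inv]
      have hte : (t : ℝ) ^ q * (t : ℝ) ^ (-(β * γ)) = (t : ℝ) ^ e := by
        rw [← Real.rpow_add hx0]
        congr 1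
        rw [hq, hβ, he]; ring
      have hBle : B ≤ C₂ * A ^ γ * (a₁ ^ κ * (2 : ℝ) ^ (-q)) := by
        rw [hB, hq]
        exact mul_le_mul_of_nonneg_left (min_le_right _ _) (by positivity)
      have hnκ : (0:ℝ) ≤ (n : ℝ) ^ κ := Real.rpow_nonneg hnn κ
      have hteκ : (0:ℝ) ≤ (t : ℝ) ^ e := Real.rpow_nonneg hx0.le e
      calc B * (n : ℝ) ^ κ * (t : ℝ) ^ e
          ≤ (C₂ * A ^ γ * (a₁ ^ κ * (2 : ℝ) ^ (-q))) * (n : ℝ) ^ κ * (t : ℝ) ^ e := by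
            have := mul_le_mul_of_nonneg_right (mul_le_mul_of_nonneg_right hBle hnκ) hteκ
            exact this
      _ = C₂ * (a₁ ^ κ * ((t : ℝ) ^ q * (2:ℝ) ^ (-q)) * (n : ℝ) ^ κ) *
            (A ^ γ * (t : ℝ) ^ (-(β * γ))) := by rw [← hte]; ring
      _ = C₂ * (a₁ ^ κ * ((t : ℝ) / 2) ^ q * (n : ℝ) ^ κ) *
            (A ^ γ * (t : ℝ) ^ (-(β * γ))) := by rw [hsplit]
      _ ≤ C₂ * (a₁ ^ κ * ((t : ℝ) - 1) ^ q * (n : ℝ) ^ κ) *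
            (A ^ γ * (t : ℝ) ^ (-(β * γ))) := by
            refine mul_le_mul_of_nonneg_right (mul_le_mul_of_nonneg_left ?_ hC₂.le)
              (by positivity)
            exact mul_le_mul_of_nonneg_right
              (mul_le_mul_of_nonneg_left hpow (by positivity)) hnκ
      _ ≤ C₂ * (c (t - 1) ^ κ * (n : ℝ) ^ κ) * (A ^ γ * (t : ℝ) ^ (-(β * γ))) := by
            exact mul_le_mul_of_nonneg_right (mul_le_mul_of_nonneg_left
              (mul_le_mul_of_nonneg_right hcκ hnκ) hC₂.le) (by positivity)
      _ = C₂ * (c (t - 1) * n) ^ κ * dl t ^ γ := by rw [hmul, hδγ]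
  -- measurability
  have hθm : ∀ n u, Measurable (θhat n u) := fun n u =>
    (hadapt n u).mono ((F n).le u) le_rfl
  have hsetm : ∀ n i : ℕ, MeasurableSet
      {ω | dl (i + 1) < l2norm (θhat n (i + 1) ω - θhat n i ω)} := by
    intro n i
    have hg : Measurable fun ω => l2norm (θhat n (i + 1) ω - θhat n i ω) :=
      l2norm_continuous.measurable.comp ((hθm n (i + 1)).sub (hθm n i))
    exact measurableSet_lt measurable_const hg
  -- per-step probability bound
  have hstep : ∀ n : ℕ, 1 ≤ n → ∀ i : ℕ,
      (μ {ω | dl (i + 1) < l2norm (θhat n (i + 1) ω - θhat n i ω)}).toReal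
        ≤ Real.exp (-(B * ((n : ℝ) ^ κ - 1))) *
          (C₁ * Real.exp (-(B * ((i + 1 : ℕ) : ℝ) ^ e))) := by
    intro n hn i
    have hip : (0:ℝ) < ((i + 1 : ℕ) : ℝ) := by positivity
    have hδ' : 0 < dl (i + 1) := mul_pos hApos (Real.rpow_pos_of_pos hip _)
    have h1 := htail n hn (i + 1) (Nat.le_add_left 1 i) (dl (i + 1)) hδ'
    simp only [Nat.add_sub_cancel] at h1
    have h2 : (μ {ω | dl (i + 1) < l2norm (θhat n (i + 1) ω - θhat n i ω)}).toReal
        ≤ C₁ * Real.exp (-C₂ * (c i * n) ^ κ * dl (i + 1) ^ γ) :=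
      tail_prob μ (F n) i (hsetm n i) h1
    refine h2.trans ?_
    have h3 := hexpineq n hn (i + 1) (Nat.le_add_left 1 i)
    simp only [Nat.add_sub_cancel] at h3
    have hnκ1 : (1:ℝ) ≤ (n : ℝ) ^ κ := Real.one_le_rpow (by exact_mod_cast hn) hκ.le
    have hte1 : (1:ℝ) ≤ ((i + 1 : ℕ) : ℝ) ^ e :=
      Real.one_le_rpow (by exact_mod_cast Nat.le_add_left 1 i) hepos.le
    have h4 : B * ((n : ℝ) ^ κ - 1) + B * ((i + 1 : ℕ) : ℝ) ^ e
        ≤ B * (n : ℝ) ^ κ * ((i + 1 : ℕ) : ℝ) ^ e := by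
      nlinarith [mul_nonneg (mul_nonneg hBpos.le (sub_nonneg.mpr hnκ1)) (sub_nonneg.mpr hte1)]
    calc C₁ * Real.exp (-C₂ * (c i * n) ^ κ * dl (i + 1) ^ γ)
        ≤ C₁ * Real.exp (-(B * ((n : ℝ) ^ κ - 1) + B * ((i + 1 : ℕ) : ℝ) ^ e)) := by
          refine mul_le_mul_of_nonneg_left ?_ hC₁.le
          apply Real.exp_le_exp.mpr
          have heq : -C₂ * (c i * ↑n) ^ κ * dl (i + 1) ^ γ
              = -(C₂ * (c i * ↑n) ^ κ * dl (i + 1) ^ γ) := by ring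
          rw [heq]
          exact neg_le_neg (h4.trans h3)
    _ = Real.exp (-(B * ((n : ℝ) ^ κ - 1))) *
          (C₁ * Real.exp (-(B * ((i + 1 : ℕ) : ℝ) ^ e))) := by
          rw [neg_add, Real.exp_add]; ring
  -- main uniform-in-T bound
  have hmain : ∀ n : ℕ, 1 ≤ n → ∀ T : ℕ,
      (μ {ω | δ ≤ l2norm (θhat n T ω - θstar)}).toReal
        ≤ Real.exp (-(B * ((n : ℝ) ^ κ - 1))) * G := by
    intro n hn T
    have hμN : μ {ω | ¬ θhat n 0 ω = θstar} = 0 := by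
      have := h0 n; rwa [ae_iff] at this
    have hincl : {ω | δ ≤ l2norm (θhat n T ω - θstar)} ⊆
        {ω | ¬ θhat n 0 ω = θstar} ∪
          ⋃ i ∈ Finset.range T, {ω | dl (i + 1) < l2norm (θhat n (i + 1) ω - θhat n i ω)} := by
      intro ω hω
      by_contra hcon
      simp only [Set.mem_union, Set.mem_iUnion, Set.mem_setOf_eq, not_or, not_exists,
        not_not, not_lt] at hcon
      obtain ⟨hθ0, hsteps⟩ := hcon
      have hsum : ∑ i ∈ Finset.range T, (θhat n (i + 1) ω - θhat n i ω)
          = θhat n T ω - θstar := by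
        rw [Finset.sum_range_sub (fun i => θhat n i ω), hθ0]
      have hle : l2norm (θhat n T ω - θstar) ≤ ∑ i ∈ Finset.range T, dl (i + 1) := by
        rw [← hsum]
        exact (l2norm_sum_le _ _).trans (Finset.sum_le_sum fun i hi => hsteps i hi)
      have hω' : δ ≤ l2norm (θhat n T ω - θstar) := hω
      linarith [hpartial T]
    set bnd : ℕ → ℝ := fun i => Real.exp (-(B * ((n : ℝ) ^ κ - 1))) *
      (C₁ * Real.exp (-(B * ((i + 1 : ℕ) : ℝ) ^ e))) with hbnd
    have hbnd0 : ∀ i, 0 ≤ bnd i := fun i => by positivity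
    have hmeasle : μ {ω | δ ≤ l2norm (θhat n T ω - θstar)}
        ≤ ∑ i ∈ Finset.range T,
            μ {ω | dl (i + 1) < l2norm (θhat n (i + 1) ω - θhat n i ω)} := by
      calc μ {ω | δ ≤ l2norm (θhat n T ω - θstar)}
          ≤ μ ({ω | ¬ θhat n 0 ω = θstar} ∪
              ⋃ i ∈ Finset.range T,
                {ω | dl (i + 1) < l2norm (θhat n (i + 1) ω - θhat n i ω)}) :=
            measure_mono hincl
      _ ≤ μ {ω | ¬ θhat n 0 ω = θstar} +
            μ (⋃ i ∈ Finset.range T,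
              {ω | dl (i + 1) < l2norm (θhat n (i + 1) ω - θhat n i ω)}) :=
            measure_union_le _ _
      _ = μ (⋃ i ∈ Finset.range T,
              {ω | dl (i + 1) < l2norm (θhat n (i + 1) ω - θhat n i ω)}) := by
            rw [hμN, zero_add]
      _ ≤ ∑ i ∈ Finset.range T,
            μ {ω | dl (i + 1) < l2norm (θhat n (i + 1) ω - θhat n i ω)} :=
            measure_biUnion_finset_le _ _
    have h5 : μ {ω | δ ≤ l2norm (θhat n T ω - θstar)}
        ≤ ENNReal.ofReal (∑ i ∈ Finset.range T, bnd i) := by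
      refine hmeasle.trans ?_
      rw [ENNReal.ofReal_sum_of_nonneg fun i _ => hbnd0 i]
      refine Finset.sum_le_sum fun i _ => ?_
      rw [ENNReal.le_ofReal_iff_toReal_le (measure_ne_top μ _) (hbnd0 i)]
      exact hstep n hn i
    have h6 : (μ {ω | δ ≤ l2norm (θhat n T ω - θstar)}).toReal
        ≤ ∑ i ∈ Finset.range T, bnd i :=
      ENNReal.toReal_le_of_le_ofReal (Finset.sum_nonneg fun i _ => hbnd0 i) h5
    refine h6.trans ?_
    rw [hbnd, ← Finset.mul_sum]
    refine mul_le_mul_of_nonneg_left ?_ (Real.exp_pos _).le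
    have h7 : ∑ i ∈ Finset.range T, C₁ * Real.exp (-(B * ((i + 1 : ℕ) : ℝ) ^ e))
        ≤ ∑ i ∈ Finset.range (T + 1), C₁ * Real.exp (-(B * (i : ℝ) ^ e)) := by
      rw [Finset.sum_range_succ' (fun i => C₁ * Real.exp (-(B * (i : ℝ) ^ e)))]
      exact le_add_of_nonneg_right (by positivity)
    exact h7.trans (Summable.sum_le_tsum _ (fun i _ => by positivity) hgsum)
  -- limsup bounds
  have hlimsup : ∀ n : ℕ, 1 ≤ n →
      limsup (fun T : ℕ => (μ {ω | δ ≤ l2norm (θhat n T ω - θstar)}).toReal) atTop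
        ≤ Real.exp (-(B * ((n : ℝ) ^ κ - 1))) * G := by
    intro n hn
    refine limsup_le_of_le ?_ (Eventually.of_forall fun T => hmain n hn T)
    exact isCoboundedUnder_le_of_le atTop fun T => ENNReal.toReal_nonneg
  have hlimsup0 : ∀ n : ℕ,
      0 ≤ limsup (fun T : ℕ => (μ {ω | δ ≤ l2norm (θhat n T ω - θstar)}).toReal) atTop := by
    intro n
    refine le_limsup_of_frequently_le
      (Frequently.of_forall fun T => ENNReal.toReal_nonneg) ?_
    refine isBoundedUnder_of ⟨1, fun T => ?_⟩
    exact ENNReal.toReal_le_of_le_ofReal one_pos.le (by simpa using prob_le_one)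
  -- convergence of the majorant
  have hh : Tendsto (fun n : ℕ => Real.exp (-(B * ((n : ℝ) ^ κ - 1))) * G)
      atTop (nhds 0) := by
    have t1 : Tendsto (fun n : ℕ => (n : ℝ) ^ κ) atTop atTop :=
      (tendsto_rpow_atTop hκ).comp tendsto_natCast_atTop_atTop
    have t2 : Tendsto (fun n : ℕ => B * ((n : ℝ) ^ κ - 1)) atTop atTop := by
      apply Tendsto.const_mul_atTop hBpos
      simpa [sub_eq_add_neg] using tendsto_atTop_add_const_right atTop (-1 : ℝ) t1
    have t3 : Tendsto (fun n : ℕ => Real.exp (-(B * ((n : ℝ) ^ κ - 1)))) atTop (nhds 0) :=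
      Real.tendsto_exp_atBot.comp (tendsto_neg_atBot_iff.mpr t2)
    simpa using t3.mul_const G
  refine tendsto_of_tendsto_of_tendsto_of_le_of_le' tendsto_const_nhds hh
    (Eventually.of_forall hlimsup0) ?_
  filter_upwards [eventually_ge_atTop 1] with n hn using hlimsup n hn
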